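/- Suppose π is a probability vector stationary for the row-stochastic matrix P. Define f(θ) := (1−γ)·‖V_θ − V_{θ*}‖_D² + γ·‖V_θ − V_{θ*}‖_Dir² for a fixed θ* ∈ EuclideanSpace ℝ (Fin d). Let Φ be the n×d matrix whose s-th row is φ(s)ᵀ, let D := diag(π), W := (1/2)·(D·P + Pᵀ·D), L := D − W, and M := Φᵀ·((1−γ)·D + γ·L)·Φ. Then for every θ: (i) f(θ) = (θ−θ*)ᵀ·M·(θ−θ*), and (ii) f is differentiable at θ with gradient ∇f(θ) = 2·M·(θ−θ*). -/

import Mathlib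

open scoped RealInnerProductSpace
open Finset Matrix

theorem stmt_9 (n d : ℕ) (hn : 1 ≤ n) (hd : 1 ≤ d)
    (γ : ℝ) (hγ : γ ∈ Set.Ioo (0 : ℝ) 1)
    (P : Matrix (Fin n) (Fin n) ℝ)
    (hP0 : ∀ s s', 0 ≤ P s s') (hP1 : ∀ s, ∑ s', P s s' = 1)
    (π : Fin n → ℝ)
    (hπ0 : ∀ s, 0 ≤ π s) (hπ1 : ∑ s, π s = 1)
    (hstat : ∀ s', ∑ s, π s * P s s' = π s')
    (φ : Fin n → EuclideanSpace ℝ (Fin d))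
    (θstar : EuclideanSpace ℝ (Fin d))
    (f : EuclideanSpace ℝ (Fin d) → ℝ)
    (hf : ∀ θ, f θ =
      (1 - γ) * (∑ s, π s * (⟪φ s, θ⟫ - ⟪φ s, θstar⟫) ^ 2) +
      γ * ((1 / 2) * ∑ s, ∑ s', π s * P s s' *
        ((⟪φ s', θ⟫ - ⟪φ s', θstar⟫) - (⟪φ s, θ⟫ - ⟪φ s, θstar⟫)) ^ 2))
    (Φ : Matrix (Fin n) (Fin d) ℝ) (hΦ : ∀ s i, Φ s i = φ s i)
    (D W L : Matrix (Fin n) (Fin n) ℝ)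
    (hD : D = Matrix.diagonal π)
    (hW : W = (1 / 2 : ℝ) • (D * P + Pᵀ * D))
    (hL : L = D - W)
    (M : Matrix (Fin d) (Fin d) ℝ)
    (hM : M = Φᵀ * ((1 - γ) • D + γ • L) * Φ)
    (θ : EuclideanSpace ℝ (Fin d)) :
    f θ = ∑ i, ∑ j, (θ i - θstar i) * M i j * (θ j - θstar j) ∧
    HasGradientAt f
      ((WithLp.equiv 2 (Fin d → ℝ)).symm
        ((2 : ℝ) • M.mulVec (fun j => θ j - θstar j))) θ := by
  -- symmetry of M
  have hsymW : Wᵀ = W := by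
    subst hW hD
    simp [Matrix.transpose_smul, Matrix.transpose_add, Matrix.transpose_mul,
      Matrix.diagonal_transpose, add_comm]
  have hsymA : ((1 - γ) • D + γ • L)ᵀ = (1 - γ) • D + γ • L := by
    rw [hL]
    simp [Matrix.transpose_add, Matrix.transpose_smul, Matrix.transpose_sub, hsymW, hD,
      Matrix.diagonal_transpose]
  have hsymM : ∀ i j, M i j = M j i := by
    have hMt : Mᵀ = M := by
      rw [hM, Matrix.transpose_mul, Matrix.transpose_mul, hsymA, Matrix.transpose_transpose,
        ← Matrix.mul_assoc]
    intro i j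
    have h2 := congrFun (congrFun hMt j) i
    simpa [Matrix.transpose_apply] using h2
  -- quadratic form identity
  have key : ∀ θ' : EuclideanSpace ℝ (Fin d),
      f θ' = ∑ i, ∑ j, (θ' i - θstar i) * M i j * (θ' j - θstar j) := by
    intro θ'
    set u : Fin d → ℝ := fun j => θ' j - θstar j with hu
    set v : Fin n → ℝ := Φ.mulVec u with hv
    have hvs : ∀ s, ⟪φ s, θ'⟫ - ⟪φ s, θstar⟫ = v s := by
      intro s
      simp only [hv, Matrix.mulVec, dotProduct, hu, PiLp.inner_apply,
        RCLike.inner_apply, starRingEnd_apply, star_trivial, hΦ, mul_sub]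
      simp only [Finset.sum_sub_distrib, mul_comm]
    have hdouble : ∑ i, ∑ j, u i * M i j * u j = v ⬝ᵥ (((1 - γ) • D + γ • L) *ᵥ v) := by
      have h1 : ∑ i, ∑ j, u i * M i j * u j = u ⬝ᵥ (M *ᵥ u) := by
        simp [dotProduct, Matrix.mulVec, Finset.mul_sum, mul_assoc]
      rw [h1, hM, ← Matrix.mulVec_mulVec, ← Matrix.mulVec_mulVec,
        dotProduct_mulVec, Matrix.vecMul_transpose]
    have hDv : v ⬝ᵥ (D *ᵥ v) = ∑ s, π s * v s ^ 2 := by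
      rw [hD]
      simp only [dotProduct, Matrix.mulVec_diagonal]
      exact Finset.sum_congr rfl fun s _ => by ring
    have hWv : v ⬝ᵥ (W *ᵥ v) = ∑ s, ∑ t, π s * P s t * v s * v t := by
      rw [hW, hD, Matrix.smul_mulVec, dotProduct_smul, Matrix.add_mulVec,
        dotProduct_add]
      have e1 : v ⬝ᵥ ((Matrix.diagonal π * P) *ᵥ v) = ∑ s, ∑ t, π s * P s t * v s * v t := by
        simp only [dotProduct, Matrix.mulVec, Matrix.diagonal_mul, Finset.mul_sum]
        exact Finset.sum_congr rfl fun s _ => Finset.sum_congr rfl fun t _ => by ring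
      have e2 : v ⬝ᵥ ((Pᵀ * Matrix.diagonal π) *ᵥ v) = ∑ s, ∑ t, π s * P s t * v s * v t := by
        simp only [dotProduct, Matrix.mulVec, Matrix.mul_diagonal,
          Matrix.transpose_apply, Finset.mul_sum]
        rw [Finset.sum_comm]
        exact Finset.sum_congr rfl fun s _ => Finset.sum_congr rfl fun t _ => by ring
      rw [e1, e2, smul_eq_mul]
      ring
    have hquad : ∑ i, ∑ j, u i * M i j * u j =
        (1 - γ) * (∑ s, π s * v s ^ 2) +
        γ * ((∑ s, π s * v s ^ 2) - ∑ s, ∑ t, π s * P s t * v s * v t) := by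
      rw [hdouble, hL, Matrix.add_mulVec, dotProduct_add,
        Matrix.smul_mulVec, Matrix.smul_mulVec,
        dotProduct_smul, dotProduct_smul, Matrix.sub_mulVec,
        dotProduct_sub, hDv, hWv, smul_eq_mul, smul_eq_mul]
    have hdir : (1 / 2 : ℝ) * ∑ s, ∑ t, π s * P s t * (v t - v s) ^ 2
        = (∑ s, π s * v s ^ 2) - ∑ s, ∑ t, π s * P s t * v s * v t := by
      have expand : ∀ s t : Fin n, π s * P s t * (v t - v s) ^ 2
          = π s * P s t * v t ^ 2 + π s * P s t * v s ^ 2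
            - 2 * (π s * P s t * v s * v t) := by
        intros; ring
      have h1 : ∑ s, ∑ t, π s * P s t * (v t - v s) ^ 2
          = (∑ s, ∑ t, π s * P s t * v t ^ 2) + (∑ s, ∑ t, π s * P s t * v s ^ 2)
            - 2 * ∑ s, ∑ t, π s * P s t * v s * v t := by
        simp only [expand, Finset.sum_sub_distrib, Finset.sum_add_distrib, ← Finset.mul_sum]
      have h2 : ∑ s, ∑ t, π s * P s t * v t ^ 2 = ∑ s, π s * v s ^ 2 := by
        rw [Finset.sum_comm]
        refine Finset.sum_congr rfl fun t _ => ?_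
        rw [← Finset.sum_mul, hstat t]
      have h3 : ∑ s, ∑ t, π s * P s t * v s ^ 2 = ∑ s, π s * v s ^ 2 := by
        refine Finset.sum_congr rfl fun s _ => ?_
        have e : ∑ t, π s * P s t * v s ^ 2 = (π s * v s ^ 2) * ∑ t, P s t := by
          rw [Finset.mul_sum]
          exact Finset.sum_congr rfl fun t _ => by ring
        rw [e, hP1, mul_one]
      rw [h1, h2, h3]; ring
    calc f θ' = (1 - γ) * (∑ s, π s * v s ^ 2) +
        γ * ((1 / 2 : ℝ) * ∑ s, ∑ t, π s * P s t * (v t - v s) ^ 2) := by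
          rw [hf θ']; simp only [hvs]
      _ = (1 - γ) * (∑ s, π s * v s ^ 2) +
        γ * ((∑ s, π s * v s ^ 2) - ∑ s, ∑ t, π s * P s t * v s * v t) := by rw [hdir]
      _ = ∑ i, ∑ j, u i * M i j * u j := hquad.symm
      _ = ∑ i, ∑ j, (θ' i - θstar i) * M i j * (θ' j - θstar j) := rfl
  refine ⟨key θ, ?_⟩
  have hfg : f = fun θ' => ∑ i, ∑ j, (θ' i - θstar i) * M i j * (θ' j - θstar j) :=
    funext key
  rw [hasGradientAt_iff_hasFDerivAt, hfg]
  have H : HasFDerivAt (fun θ' : EuclideanSpace ℝ (Fin d) =>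
      ∑ i, ∑ j, (θ' i - θstar i) * M i j * (θ' j - θstar j))
      (∑ i : Fin d, ∑ j : Fin d,
        (((θ i - θstar i) * M i j) • (EuclideanSpace.proj j : EuclideanSpace ℝ (Fin d) →L[ℝ] ℝ) +
         (θ j - θstar j) • (M i j • (EuclideanSpace.proj i : EuclideanSpace ℝ (Fin d) →L[ℝ] ℝ)))) θ := by
    apply HasFDerivAt.fun_sum
    intro i _
    apply HasFDerivAt.fun_sum
    intro j _
    have h1 : HasFDerivAt (fun θ' : EuclideanSpace ℝ (Fin d) => (θ' i - θstar i) * M i j)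
        (M i j • (EuclideanSpace.proj i : EuclideanSpace ℝ (Fin d) →L[ℝ] ℝ)) θ := by
      exact (((EuclideanSpace.proj i : EuclideanSpace ℝ (Fin d) →L[ℝ] ℝ).hasFDerivAt
        (x := θ)).sub_const (θstar i)).mul_const (M i j)
    have h2 : HasFDerivAt (fun θ' : EuclideanSpace ℝ (Fin d) => θ' j - θstar j)
        (EuclideanSpace.proj j : EuclideanSpace ℝ (Fin d) →L[ℝ] ℝ) θ :=
      ((EuclideanSpace.proj j : EuclideanSpace ℝ (Fin d) →L[ℝ] ℝ).hasFDerivAt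
        (x := θ)).sub_const (θstar j)
    exact h1.mul h2
  refine H.congr_fderiv ?_
  ext h
  simp only [ContinuousLinearMap.coe_sum', Finset.sum_apply, ContinuousLinearMap.add_apply,
    ContinuousLinearMap.coe_smul', Pi.smul_apply, PiLp.proj_apply, smul_eq_mul,
    InnerProductSpace.toDual_apply_apply, PiLp.inner_apply, RCLike.inner_apply, starRingEnd_apply,
    star_trivial, WithLp.equiv_symm_apply, PiLp.toLp_apply, Matrix.mulVec, dotProduct]
  have hA : ∑ i, ∑ j, (θ i - θstar i) * M i j * h j
      = ∑ k, (∑ j, M k j * (θ j - θstar j)) * h k := by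
    rw [Finset.sum_comm]
    refine Finset.sum_congr rfl fun k _ => ?_
    rw [Finset.sum_mul]
    refine Finset.sum_congr rfl fun i _ => ?_
    rw [hsymM i k]; ring
  have hB : ∑ k, ∑ j, (θ j - θstar j) * (M k j * h k)
      = ∑ k, (∑ j, M k j * (θ j - θstar j)) * h k := by
    refine Finset.sum_congr rfl fun k _ => ?_
    rw [Finset.sum_mul]
    exact Finset.sum_congr rfl fun j _ => by ring
  calc ∑ i, ∑ j, ((θ i - θstar i) * M i j * h j + (θ j - θstar j) * (M i j * h i))
      = (∑ i, ∑ j, (θ i - θstar i) * M i j * h j)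
        + ∑ k, ∑ j, (θ j - θstar j) * (M k j * h k) := by
        simp only [Finset.sum_add_distrib]
    _ = ∑ k, 2 * (∑ j, M k j * (θ j - θstar j)) * h k := by
        rw [hA, hB, ← Finset.sum_add_distrib]
        exact Finset.sum_congr rfl fun k _ => by ring
    _ = ∑ x, h x * (2 * ∑ x_1, M x x_1 * (θ x_1 - θstar x_1)) :=
        Finset.sum_congr rfl fun k _ => by ring
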